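/- Let n ≥ 3 be an integer and let J be the n×n integer matrix with J·e_i = e_{i+1} for 1 ≤ i < n and J·e_n = 0. Let P̂ = 1 + J and Q̂ = 1 + J + J², viewed as elements of GL_n(ℤ) (both are unipotent, hence invertible over ℤ). Then P̂ and Q̂ commute, and the map ℤ × ℤ → GL_n(ℤ) sending (a, b) to P̂^a · Q̂^b is an injective group homomorphism. In particular, the subgroup of GL_n(ℤ) generated by P̂ and Q̂ is free abelian of rank 2, and the cyclic subgroups generated by P̂ and by Q̂ intersect trivially. -/
import Mathlib


open Matrix Polynomial

/-- The `n × n` nilpotent Jordan block over a ring `R`: `J e_i = e_{i+1}` for `i < n`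
and `J e_n = 0`, i.e. the matrix with ones on the subdiagonal and zeros elsewhere. -/
def jordanJ (n : ℕ) (R : Type) [Ring R] : Matrix (Fin n) (Fin n) R :=
  Matrix.of fun i j => if (i : ℕ) = (j : ℕ) + 1 then 1 else 0


lemma jordanJ_pow_apply (n k : ℕ) (i j : Fin n) :
    (jordanJ n ℤ ^ k) i j = if (i : ℕ) = (j : ℕ) + k then 1 else 0 := by
  induction k generalizing i j with
  | zero => simp [Matrix.one_apply, Fin.ext_iff]
  | succ k ih =>
    rw [pow_succ, Matrix.mul_apply]
    simp only [ih]
    simp only [jordanJ, Matrix.of_apply]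
    by_cases h : (j : ℕ) + 1 < n
    · rw [Finset.sum_eq_single (⟨(j : ℕ) + 1, h⟩ : Fin n)]
      · split_ifs <;> simp_all <;> omega
      · intro b _ hb
        have : (b : ℕ) ≠ (j : ℕ) + 1 := fun hh => hb (Fin.ext hh)
        simp [this]
      · simp
    · rw [Finset.sum_eq_zero, if_neg (by omega)]
      intro m _
      have : (m : ℕ) ≠ (j : ℕ) + 1 := by omega
      simp [this]

lemma jordanJ_apply (n : ℕ) (i j : Fin n) :
    jordanJ n ℤ i j = if (i : ℕ) = (j : ℕ) + 1 then 1 else 0 := rfl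

def RepJ (n : ℕ) (M : Matrix (Fin n) (Fin n) ℤ) (x y : ℤ) : Prop :=
  ∃ p : ℤ[X], M = Polynomial.aeval (jordanJ n ℤ)
    (1 + Polynomial.C x * X + Polynomial.C y * X ^ 2 + X ^ 3 * p)

lemma rep_mul {n : ℕ} {M N : Matrix (Fin n) (Fin n) ℤ} {x1 y1 x2 y2 : ℤ}
    (h1 : RepJ n M x1 y1) (h2 : RepJ n N x2 y2) :
    RepJ n (M * N) (x1 + x2) (y1 + y2 + x1 * x2) := by
  obtain ⟨p, rfl⟩ := h1
  obtain ⟨q, rfl⟩ := h2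
  refine ⟨Polynomial.C (x1 * y2 + x2 * y1) + Polynomial.C (y1 * y2) * X
    + (1 + Polynomial.C x1 * X + Polynomial.C y1 * X ^ 2) * q
    + p * (1 + Polynomial.C x2 * X + Polynomial.C y2 * X ^ 2 + X ^ 3 * q), ?_⟩
  rw [← _root_.map_mul]
  congr 1
  simp only [C_add, C_mul]
  ring

lemma rep_P (n : ℕ) : RepJ n (1 + jordanJ n ℤ) 1 0 := ⟨0, by simp⟩

lemma rep_Q (n : ℕ) : RepJ n (1 + jordanJ n ℤ + jordanJ n ℤ ^ 2) 1 1 := ⟨0, by simp⟩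

lemma rep_pow {n : ℕ} {M : Matrix (Fin n) (Fin n) ℤ} {x y : ℤ} (h : RepJ n M x y) :
    ∀ k : ℕ, ∃ y' : ℤ, RepJ n (M ^ k) ((k : ℤ) * x) y' ∧
      2 * y' = (k : ℤ) * ((k : ℤ) - 1) * x ^ 2 + 2 * (k : ℤ) * y := by
  intro k
  induction k with
  | zero =>
    refine ⟨0, ⟨0, ?_⟩, by push_cast; ring⟩
    simp
  | succ k ih =>
    obtain ⟨y', hrep, hy⟩ := ih
    refine ⟨y' + y + (k : ℤ) * x * x, ?_, ?_⟩
    · have hx : ((k + 1 : ℕ) : ℤ) * x = (k : ℤ) * x + x := by push_cast; ring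
      rw [pow_succ, hx]
      exact rep_mul hrep h
    · push_cast
      linear_combination hy

lemma J3_mul_apply {n : ℕ} (M : Matrix (Fin n) (Fin n) ℤ) (i j : Fin n) (hi : (i : ℕ) < 3) :
    (jordanJ n ℤ ^ 3 * M) i j = 0 := by
  rw [Matrix.mul_apply]
  apply Finset.sum_eq_zero
  intro m _
  rw [jordanJ_pow_apply, if_neg (by omega), zero_mul]

lemma rep_entries {n : ℕ} (hn : 3 ≤ n) {M : Matrix (Fin n) (Fin n) ℤ} {x y : ℤ}
    (h : RepJ n M x y) :
    M ⟨1, by omega⟩ ⟨0, by omega⟩ = x ∧ M ⟨2, by omega⟩ ⟨0, by omega⟩ = y := by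
  obtain ⟨p, rfl⟩ := h
  have hM : (aeval (jordanJ n ℤ)) (1 + C x * X + C y * X ^ 2 + X ^ 3 * p)
      = 1 + x • jordanJ n ℤ + y • jordanJ n ℤ ^ 2
        + jordanJ n ℤ ^ 3 * (aeval (jordanJ n ℤ)) p := by
    simp only [map_add, _root_.map_mul, map_pow, _root_.map_one, aeval_X, aeval_C,
      Algebra.algebraMap_eq_smul_one, smul_mul_assoc, one_mul]
  rw [hM]
  constructor <;>
  · simp only [Matrix.add_apply, Matrix.smul_apply, Matrix.one_apply, jordanJ_apply,
      jordanJ_pow_apply]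
    rw [J3_mul_apply _ _ _ (by norm_num)]
    norm_num [Fin.ext_iff]

lemma key1 {n : ℕ} (hn : 3 ≤ n) (s t : ℕ)
    (h : (1 + jordanJ n ℤ) ^ s * (1 + jordanJ n ℤ + jordanJ n ℤ ^ 2) ^ t = 1) :
    s = 0 ∧ t = 0 := by
  obtain ⟨ya, hPa, _⟩ := rep_pow (rep_P n) s
  obtain ⟨yb, hQb, _⟩ := rep_pow (rep_Q n) t
  have hh := rep_mul hPa hQb
  rw [h] at hh
  have e := (rep_entries hn hh).1
  rw [Matrix.one_apply_ne (by simp [Fin.ext_iff])] at e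
  simp only [mul_one] at e
  constructor <;> omega

lemma key2 {n : ℕ} (hn : 3 ≤ n) (s t : ℕ)
    (h : (1 + jordanJ n ℤ) ^ s = (1 + jordanJ n ℤ + jordanJ n ℤ ^ 2) ^ t) :
    s = 0 ∧ t = 0 := by
  obtain ⟨ya, hPa, h2a⟩ := rep_pow (rep_P n) s
  obtain ⟨yb, hQb, h2b⟩ := rep_pow (rep_Q n) t
  rw [h] at hPa
  have e1 := (rep_entries hn hPa).1
  have e1' := (rep_entries hn hQb).1
  have e2 := (rep_entries hn hPa).2
  have e2' := (rep_entries hn hQb).2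
  have hst : (s : ℤ) * 1 = (t : ℤ) * 1 := e1.symm.trans e1'
  have hts : s = t := by exact_mod_cast by simpa using hst
  subst hts
  have hy : ya = yb := e2.symm.trans e2'
  have h2s : (2 : ℤ) * s = 0 := by linear_combination h2a - h2b - 2 * hy
  have : s = 0 := by exact_mod_cast by omega
  exact ⟨this, this⟩

/-- For `n ≥ 3`, the elements `P̂ = 1 + J` and `Q̂ = 1 + J + J²` of `GL n ℤ` commute,
the map `(a, b) ↦ P̂^a * Q̂^b` is an injective group homomorphism `ℤ × ℤ → GL n ℤ`
whose range is the subgroup generated by `P̂` and `Q̂` (so that subgroup is free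
abelian of rank 2), and the cyclic subgroups generated by `P̂` and `Q̂` intersect
trivially. -/
theorem integer_unipotent_free_abelian (n : ℕ) (hn : 3 ≤ n) (Phat Qhat : GL (Fin n) ℤ)
    (hP : (Phat : Matrix (Fin n) (Fin n) ℤ) = 1 + jordanJ n ℤ)
    (hQ : (Qhat : Matrix (Fin n) (Fin n) ℤ) = 1 + jordanJ n ℤ + jordanJ n ℤ ^ 2) :
    Commute Phat Qhat ∧
    (∃ f : Multiplicative (ℤ × ℤ) →* GL (Fin n) ℤ,
      Function.Injective f ∧
      (∀ a b : ℤ, f (Multiplicative.ofAdd (a, b)) = Phat ^ a * Qhat ^ b) ∧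
      f.range = Subgroup.closure {Phat, Qhat}) ∧
    Subgroup.zpowers Phat ⊓ Subgroup.zpowers Qhat = ⊥ := by
  have hmP : ∀ s : ℕ, ((Phat ^ (s : ℤ) : GL (Fin n) ℤ) : Matrix (Fin n) (Fin n) ℤ)
      = (1 + jordanJ n ℤ) ^ s := by
    intro s; rw [zpow_natCast, Units.val_pow_eq_pow_val, hP]
  have hmQ : ∀ t : ℕ, ((Qhat ^ (t : ℤ) : GL (Fin n) ℤ) : Matrix (Fin n) (Fin n) ℤ)
      = (1 + jordanJ n ℤ + jordanJ n ℤ ^ 2) ^ t := by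
    intro t; rw [zpow_natCast, Units.val_pow_eq_pow_val, hQ]
  have hinj : ∀ a b : ℤ, Phat ^ a * Qhat ^ b = 1 → a = 0 ∧ b = 0 := by
    intro a b hab
    have hac : Phat ^ a = Qhat ^ (-b) := by
      rw [_root_.zpow_neg]; exact eq_inv_iff_mul_eq_one.mpr hab
    suffices h : a = 0 ∧ -b = 0 by exact ⟨h.1, by omega⟩
    generalize hc : -b = c at hac ⊢
    rcases le_or_gt 0 a with ha | ha <;> rcases le_or_gt 0 c with hcc | hcc
    · lift a to ℕ using ha with s
      lift c to ℕ using hcc with t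
      have hm := congrArg (Units.val) hac
      rw [hmP, hmQ] at hm
      obtain ⟨h1, h2⟩ := key2 hn s t hm
      constructor <;> simp [h1, h2]
    · have hmm : Phat ^ a * Qhat ^ (-c) = 1 := by
        rw [hac, ← _root_.zpow_add]; simp
      lift a to ℕ using ha with s
      lift (-c) to ℕ using (by omega : (0:ℤ) ≤ -c) with t ht
      have hm := congrArg (Units.val) hmm
      rw [Units.val_mul, hmP, hmQ, Units.val_one] at hm
      obtain ⟨h1, h2⟩ := key1 hn s t hm
      constructor
      · simp [h1]
      · omega
    · have hmm : Phat ^ (-a) * Qhat ^ c = 1 := by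
        rw [← hac, ← _root_.zpow_add]; simp
      lift c to ℕ using hcc with t
      lift (-a) to ℕ using (by omega : (0:ℤ) ≤ -a) with s hs
      have hm := congrArg (Units.val) hmm
      rw [Units.val_mul, hmP, hmQ, Units.val_one] at hm
      obtain ⟨h1, h2⟩ := key1 hn s t hm
      constructor
      · omega
      · simp [h2]
    · have hac' : Phat ^ (-a) = Qhat ^ (-c) := by
        rw [_root_.zpow_neg, _root_.zpow_neg, hac]
      lift (-a) to ℕ using (by omega : (0:ℤ) ≤ -a) with s hs
      lift (-c) to ℕ using (by omega : (0:ℤ) ≤ -c) with t ht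
      have hm := congrArg (Units.val) hac'
      rw [hmP, hmQ] at hm
      obtain ⟨h1, h2⟩ := key2 hn s t hm
      constructor <;> omega
  have hcom : Commute Phat Qhat := by
    show Phat * Qhat = Qhat * Phat
    apply Units.ext
    rw [Units.val_mul, Units.val_mul, hP, hQ]
    noncomm_ring
  refine ⟨hcom, ⟨{
      toFun := fun g => Phat ^ (Multiplicative.toAdd g).1 * Qhat ^ (Multiplicative.toAdd g).2
      map_one' := by simp
      map_mul' := by
        intro g h
        simp only [toAdd_mul, Prod.fst_add, Prod.snd_add, _root_.zpow_add]
        rw [mul_assoc, ← mul_assoc (Phat ^ (Multiplicative.toAdd h).1),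
          (hcom.zpow_zpow (Multiplicative.toAdd h).1 (Multiplicative.toAdd g).2).eq,
          mul_assoc, ← mul_assoc, ← mul_assoc]
    }, ?_, ?_, ?_⟩, ?_⟩
  · rw [injective_iff_map_eq_one]
    intro g hg
    obtain ⟨h1, h2⟩ := hinj _ _ hg
    have : Multiplicative.toAdd g = 0 := Prod.ext h1 h2
    simpa using congrArg Multiplicative.ofAdd this
  · intro a b; rfl
  · apply le_antisymm
    · rintro x ⟨g, rfl⟩
      exact mul_mem
        (Subgroup.zpow_mem _ (Subgroup.subset_closure (by simp)) _)
        (Subgroup.zpow_mem _ (Subgroup.subset_closure (by simp)) _)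
    · rw [Subgroup.closure_le]
      rintro x (rfl | rfl)
      · exact ⟨Multiplicative.ofAdd (1, 0), by simp⟩
      · exact ⟨Multiplicative.ofAdd (0, 1), by simp⟩
  · rw [eq_bot_iff]
    rintro x hx
    obtain ⟨⟨a, ha⟩, ⟨b, hb⟩⟩ := Subgroup.mem_inf.mp hx
    replace ha : Phat ^ a = x := ha
    replace hb : Qhat ^ b = x := hb
    have hone : Phat ^ a * Qhat ^ (-b) = 1 := by
      rw [_root_.zpow_neg, ha, hb, ← ha, mul_inv_cancel]
    obtain ⟨h1, _⟩ := hinj _ _ hone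
    have : x = 1 := by rw [← ha, h1, zpow_zero]
    simp [this]
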